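/- arXiv:1812.01549 — 2 statements merged into one kernel-verified Lean document; each statement's English description precedes it below -/
import Mathlib

section
/- Let (X_n)_{n∈ℕ} and (Y_n)_{n∈ℕ} be sequences of nonempty linear orders on subsets of ℕ such that for every n, at least one of X_n, Y_n is well-founded. Let U = Σ_{n∈ℕ} (ℚ_q*Y_n)*X_n and, for each n, Z_n = (U + X_n)*Y_n. Then for every n: Z_n is a well order; if X_n is not well-founded then |Z_n| < |U|; and if Y_n is not well-founded then |U| < |Z_n|. -/
/-- A tree on ℕ: a set of finite sequences of naturals closed under initial segments. -/
def IsTree (T : Set (List ℕ)) : Prop :=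
  ∀ s ∈ T, ∀ t : List ℕ, t <+: s → t ∈ T

/-- `x : ℕ → ℕ` is a branch of `T`: all of its finite initial segments belong to `T`. -/
def IsBranch (T : Set (List ℕ)) (x : ℕ → ℕ) : Prop :=
  ∀ n : ℕ, (List.range n).map x ∈ T

/-- `[T]`, the set of branches of `T`. -/
def Branches (T : Set (List ℕ)) : Set (ℕ → ℕ) := {x | IsBranch T x}

/-- The Kleene–Brouwer ordering on finite sequences of naturals: `s <_KB t` iff
`t` is a proper initial segment of `s`, or at the first position where `s` and `t`
differ, the entry of `s` is smaller. -/
def KB (s t : List ℕ) : Prop :=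
  (t <+: s ∧ t ≠ s) ∨
    ∃ i, i < s.length ∧ i < t.length ∧ (∀ j, j < i → s.getD j 0 = t.getD j 0) ∧
      s.getD i 0 < t.getD i 0

/-- `r` is a strict linear order on the set `X`. -/
def IsLinOrdOn {α : Type*} (X : Set α) (r : α → α → Prop) : Prop :=
  (∀ a ∈ X, ∀ b ∈ X, ∀ c ∈ X, r a b → r b c → r a c) ∧
  (∀ a ∈ X, ¬r a a) ∧
  (∀ a ∈ X, ∀ b ∈ X, r a b ∨ a = b ∨ r b a)

/-- `r` is a well order on the set `X`: a strict linear order on `X` that is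
well-founded on `X`. -/
def IsWellOrdOn {α : Type*} (X : Set α) (r : α → α → Prop) : Prop :=
  IsLinOrdOn X r ∧ WellFounded (Subrel r X)

/-- The double descent tree `T(X,Y)` of two linear orders on subsets of ℕ:
finite sequences of (coded) pairs `(m_i, n_i)` with the `m_i` strictly descending
in `X` and the `n_i` strictly descending in `Y`.  Pairs are coded by `Nat.pair`. -/
def DDT (X Y : Set ℕ) (rX rY : ℕ → ℕ → Prop) : Set (List ℕ) :=
  {l | (∀ i, i < l.length → (Nat.unpair (l.getD i 0)).1 ∈ X ∧ (Nat.unpair (l.getD i 0)).2 ∈ Y) ∧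
       (∀ i, i + 1 < l.length →
         rX (Nat.unpair (l.getD (i + 1) 0)).1 (Nat.unpair (l.getD i 0)).1 ∧
         rY (Nat.unpair (l.getD (i + 1) 0)).2 (Nat.unpair (l.getD i 0)).2)}

/-- A (candidate) linear order on a subset of ℕ: a domain together with a
strict order relation. -/
abbrev NatOrd := Set ℕ × (ℕ → ℕ → Prop)

/-- `A` is a linear order on a subset of ℕ. -/
def IsLinN (A : NatOrd) : Prop := IsLinOrdOn A.1 A.2

/-- `A` is well-founded (on its domain). -/
def WFN (A : NatOrd) : Prop := WellFounded (Subrel A.2 A.1)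

/-- `A` is a well order on a subset of ℕ. -/
def IsWON (A : NatOrd) : Prop := IsLinN A ∧ WFN A

/-- A fixed injective coding of finite sequences of naturals into ℕ. -/
def listCode : List ℕ → ℕ := Encodable.encode

/-- `A*B`, regarded as a linear order on a subset of ℕ: the Kleene–Brouwer ordering
of the double descent tree `T(A,B)`, transported to ℕ along the injective coding
`listCode`. -/
def ddStar (A B : NatOrd) : NatOrd :=
  (listCode '' DDT A.1 B.1 A.2 B.2,
   fun a b => ∃ s ∈ DDT A.1 B.1 A.2 B.2, ∃ t ∈ DDT A.1 B.1 A.2 B.2,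
     listCode s = a ∧ listCode t = b ∧ KB s t)

/-- `Σ_{n∈ℕ} L n`: the sum of the sequence of orders `L`, with domain coded into ℕ
via `Nat.pair n a` for `a` in the domain of `L n`, ordered lexicographically. -/
def sigmaOrd (L : ℕ → NatOrd) : NatOrd :=
  ({x | x.unpair.2 ∈ (L x.unpair.1).1},
   fun x y => x.unpair.1 < y.unpair.1 ∨
     (x.unpair.1 = y.unpair.1 ∧ (L x.unpair.1).2 x.unpair.2 y.unpair.2))

/-- `A + B`: the sum of two orders, every element of `A` preceding every element
of `B`, with domain coded into ℕ. -/
def addOrd (A B : NatOrd) : NatOrd :=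
  ({x | (x.unpair.1 = 0 ∧ x.unpair.2 ∈ A.1) ∨ (x.unpair.1 = 1 ∧ x.unpair.2 ∈ B.1)},
   fun x y => x.unpair.1 < y.unpair.1 ∨
     (x.unpair.1 = 0 ∧ y.unpair.1 = 0 ∧ A.2 x.unpair.2 y.unpair.2) ∨
     (x.unpair.1 = 1 ∧ y.unpair.1 = 1 ∧ B.2 x.unpair.2 y.unpair.2))

/-- The linear order `ℚ_q` on ℕ induced by a bijection `q : ℕ → ℚ`. -/
def ratOrd (q : ℕ → ℚ) : NatOrd := (Set.univ, fun m n => q m < q n)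

/-- The well order `U = Σ_{n∈ℕ} (ℚ_q*Y_n)*X_n`. -/
def Uord (q : ℕ → ℚ) (X Y : ℕ → NatOrd) : NatOrd :=
  sigmaOrd fun n => ddStar (ddStar (ratOrd q) (Y n)) (X n)

/-- The order `Z_n = (U + X_n)*Y_n`. -/
def Zord (q : ℕ → ℚ) (X Y : ℕ → NatOrd) (n : ℕ) : NatOrd :=
  ddStar (addOrd (Uord q X Y) (X n)) (Y n)

section ZordAux
open Ordinal Order

theorem kb_nil (t : List ℕ) : ¬ KB [] t := by
  rintro (⟨h, hne⟩ | ⟨i, hi, _⟩)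
  · exact hne (List.prefix_nil.mp h)
  · simp at hi

theorem kb_of_ne_nil {s : List ℕ} (h : s ≠ []) : KB s [] :=
  Or.inl ⟨List.nil_prefix, fun e => h e.symm⟩

theorem kb_cons_iff {a b : ℕ} {s t : List ℕ} :
    KB (a :: s) (b :: t) ↔ a < b ∨ (a = b ∧ KB s t) := by
  constructor
  · rintro (⟨h, hne⟩ | ⟨i, hi1, hi2, hj, hlt⟩)
    · rw [List.cons_prefix_cons] at h
      exact Or.inr ⟨h.1.symm, Or.inl ⟨h.2, fun e => hne (by rw [h.1, e])⟩⟩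
    · rcases i with _ | i
      · simpa using Or.inl hlt
      · refine Or.inr ⟨by simpa using hj 0 (Nat.succ_pos i), Or.inr ⟨i, ?_, ?_, ?_, ?_⟩⟩
        · simpa using hi1
        · simpa using hi2
        · intro j hj'
          have := hj (j+1) (by omega)
          simpa using this
        · simpa using hlt
  · rintro (h | ⟨rfl, (⟨h, hne⟩ | ⟨i, hi1, hi2, hj, hlt⟩)⟩)
    · exact Or.inr ⟨0, by simp, by simp, by simp, by simpa using h⟩
    · exact Or.inl ⟨List.cons_prefix_cons.mpr ⟨rfl, h⟩, by simpa using hne⟩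
    · refine Or.inr ⟨i+1, by simpa using hi1, by simpa using hi2, ?_, by simpa using hlt⟩
      intro j hj'
      rcases j with _ | j
      · simp
      · simpa using hj j (by omega)

theorem kb_irrefl (s : List ℕ) : ¬ KB s s := by
  induction s with
  | nil => exact kb_nil []
  | cons a s ih =>
    rw [kb_cons_iff]
    rintro (h | ⟨-, h⟩)
    · omega
    · exact ih h

theorem kb_trans : ∀ {s t u : List ℕ}, KB s t → KB t u → KB s u := by
  intro s
  induction s with
  | nil => intro t u h; exact absurd h (kb_nil t)
  | cons a s ih =>
    intro t u h1 h2
    rcases t with _ | ⟨b, t⟩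
    · exact absurd h2 (kb_nil u)
    rcases u with _ | ⟨c, u⟩
    · exact kb_of_ne_nil (by simp)
    rw [kb_cons_iff] at h1 h2 ⊢
    rcases h1 with h1 | ⟨rfl, h1⟩ <;> rcases h2 with h2 | ⟨rfl, h2⟩
    · exact Or.inl (h1.trans h2)
    · exact Or.inl h1
    · exact Or.inl h2
    · exact Or.inr ⟨rfl, ih h1 h2⟩

theorem kb_total : ∀ {s t : List ℕ}, s ≠ t → KB s t ∨ KB t s := by
  intro s
  induction s with
  | nil => intro t ht; exact Or.inr (kb_of_ne_nil (Ne.symm ht))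
  | cons a s ih =>
    intro t ht
    rcases t with _ | ⟨b, t⟩
    · exact Or.inl (kb_of_ne_nil (by simp))
    rcases Nat.lt_trichotomy a b with h | rfl | h
    · exact Or.inl (kb_cons_iff.mpr (Or.inl h))
    · rcases ih (fun e => ht (by rw [e])) with h | h
      · exact Or.inl (kb_cons_iff.mpr (Or.inr ⟨rfl, h⟩))
      · exact Or.inr (kb_cons_iff.mpr (Or.inr ⟨rfl, h⟩))
    · exact Or.inr (kb_cons_iff.mpr (Or.inl h))

theorem kb_append_lt {c c' : ℕ} (h : c < c') : ∀ (s e : List ℕ), KB (s ++ [c]) (s ++ c' :: e) := by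
  intro s e
  induction s with
  | nil => exact kb_cons_iff.mpr (Or.inl h)
  | cons a s ih => exact kb_cons_iff.mpr (Or.inr ⟨rfl, ih⟩)

theorem kb_ext {e : List ℕ} (he : e ≠ []) (s : List ℕ) : KB (s ++ e) s :=
  Or.inl ⟨List.prefix_append s e, by
    intro h
    have := congrArg List.length h
    simp at this
    exact he this⟩

noncomputable def gfun (R : ℕ → Ordinal) : Ordinal → List ℕ → Ordinal
  | cap, [] => ω ^ (cap + 1)
  | cap, c :: rest => ω ^ cap * (c : Ordinal) + gfun R (R c) rest

def ValidL (R : ℕ → Ordinal) : Ordinal → List ℕ → Prop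
  | _, [] => True
  | cap, c :: rest => R c < cap ∧ ValidL R (R c) rest

theorem gfun_pos (R : ℕ → Ordinal) : ∀ cap l, 0 < gfun R cap l := by
  intro cap l
  induction l generalizing cap with
  | nil => exact opow_pos _ omega0_pos
  | cons c rest ih =>
    exact lt_of_lt_of_le (ih (R c)) (le_add_self)

theorem gfun_le (R : ℕ → Ordinal) : ∀ {cap l}, ValidL R cap l →
    (gfun R cap l ≤ ω ^ (cap + 1)) ∧ (∀ c rest, l = c :: rest → gfun R cap l ≤ ω ^ cap * ((c : Ordinal) + 1)) := by
  intro cap l h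
  induction l generalizing cap with
  | nil => exact ⟨le_rfl, by simp⟩
  | cons c rest ih =>
    obtain ⟨hc, hv⟩ := h
    have h1 : gfun R (R c) rest ≤ ω ^ (R c + 1) := (ih hv).1
    have h2 : ω ^ (R c + 1) ≤ ω ^ cap :=
      opow_le_opow_right omega0_pos (by rwa [← Order.add_one_le_iff] at hc)
    have key : gfun R cap (c :: rest) ≤ ω ^ cap * ((c : Ordinal) + 1) := by
      show ω ^ cap * (c : Ordinal) + gfun R (R c) rest ≤ _
      calc ω ^ cap * (c : Ordinal) + gfun R (R c) rest
          ≤ ω ^ cap * (c : Ordinal) + ω ^ cap := add_le_add_right (h1.trans h2) _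
        _ = ω ^ cap * ((c : Ordinal) + 1) := by rw [mul_add_one]
    refine ⟨key.trans ?_, fun c' rest' he => by cases he; exact key⟩
    calc ω ^ cap * ((c : Ordinal) + 1) ≤ ω ^ cap * ω := by
          refine mul_le_mul_right (le_of_lt ?_) _
          have : ((c : Ordinal) + 1) = ((c + 1 : ℕ) : Ordinal) := by norm_cast
          rw [this]; exact nat_lt_omega0 _
      _ = ω ^ (cap + 1) := by rw [opow_add, opow_one]

theorem gfun_lt (R : ℕ → Ordinal) {cap c rest} (h : ValidL R cap (c :: rest)) :
    gfun R cap (c :: rest) < ω ^ (cap + 1) := by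
  refine lt_of_le_of_lt ((gfun_le R h).2 c rest rfl) ?_
  rw [opow_add, opow_one]
  refine (mul_lt_mul_iff_right₀ (opow_pos _ omega0_pos)).mpr ?_
  have : ((c : Ordinal) + 1) = ((c + 1 : ℕ) : Ordinal) := by norm_cast
  rw [this]; exact nat_lt_omega0 _

theorem gfun_mono (R : ℕ → Ordinal) : ∀ {s t : List ℕ} {cap}, ValidL R cap s → ValidL R cap t →
    KB s t → gfun R cap s < gfun R cap t := by
  intro s
  induction s with
  | nil => intro t cap _ _ h; exact absurd h (kb_nil t)
  | cons c s ih =>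
    intro t cap hs ht h
    rcases t with _ | ⟨d, t⟩
    · exact gfun_lt R hs
    rw [kb_cons_iff] at h
    rcases h with h | ⟨rfl, h⟩
    · calc gfun R cap (c :: s) ≤ ω ^ cap * ((c : Ordinal) + 1) := (gfun_le R hs).2 c s rfl
        _ ≤ ω ^ cap * (d : Ordinal) := by
            refine mul_le_mul_right ?_ _
            have : ((c : Ordinal) + 1) = ((c + 1 : ℕ) : Ordinal) := by norm_cast
            rw [this]; exact_mod_cast Nat.cast_le.mpr h
        _ < ω ^ cap * (d : Ordinal) + gfun R (R d) t := by
            simpa using (gfun_pos R (R d) t)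
        _ = gfun R cap (d :: t) := rfl
    · exact add_lt_add_right (ih hs.2 ht.2 h) _

def kbRel (T : Set (List ℕ)) (a b : ℕ) : Prop :=
  ∃ s ∈ T, ∃ t ∈ T, listCode s = a ∧ listCode t = b ∧ KB s t

theorem listCode_inj : Function.Injective listCode := Encodable.encode_injective

theorem lin_kb (T : Set (List ℕ)) : IsLinOrdOn (listCode '' T) (kbRel T) := by
  refine ⟨?_, ?_, ?_⟩
  · rintro a - b - c - ⟨s, hs, t, ht, rfl, rfl, hst⟩ ⟨t', ht', u, hu, he, rfl, htu⟩
    exact ⟨s, hs, u, hu, rfl, rfl, kb_trans hst (listCode_inj he ▸ htu)⟩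
  · rintro a - ⟨s, hs, t, ht, rfl, he, hst⟩
    exact kb_irrefl s (listCode_inj he.symm ▸ hst)
  · rintro a ⟨s, hs, rfl⟩ b ⟨t, ht, rfl⟩
    by_cases h : s = t
    · exact Or.inr (Or.inl (by rw [h]))
    · rcases kb_total h with h' | h'
      · exact Or.inl ⟨s, hs, t, ht, rfl, rfl, h'⟩
      · exact Or.inr (Or.inr ⟨t, ht, s, hs, rfl, rfl, h'⟩)

-- strictly monotone ordinal measure gives typein bounds
theorem typein_le_of_mono {α : Type} {r : α → α → Prop} [IsWellOrder α r]
    (m : α → Ordinal) (hm : ∀ a b, r a b → m a < m b) : ∀ a, typein r a ≤ m a := by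
  intro a
  induction a using (IsWellFounded.wf (r := r)).induction with
  | _ a ih =>
    by_contra hcon
    push_neg at hcon
    obtain ⟨b, hb⟩ := typein_surj r (hcon.trans (typein_lt_type r a))
    have hrba : r b a := by
      have := typein_lt_typein r (a := b) (b := a)
      rw [hb] at this
      exact this.mp hcon
    exact absurd (lt_of_le_of_lt (ih b hrba) (hm b a hrba)) (by rw [hb]; exact lt_irrefl _)

theorem type_le_of_typein_lt {α : Type} {r : α → α → Prop} [IsWellOrder α r]
    {c : Ordinal} (h : ∀ a, typein r a < c) : type r ≤ c := by
  by_contra hc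
  push_neg at hc
  obtain ⟨a, ha⟩ := typein_surj r hc
  exact absurd (ha ▸ h a) (lt_irrefl _)

theorem valid_of_getD {R : ℕ → Ordinal.{0}} : ∀ {s : List ℕ} {cap : Ordinal},
    (∀ i, i + 1 < s.length → R (s.getD (i+1) 0) < R (s.getD i 0)) →
    (s ≠ [] → R (s.getD 0 0) < cap) → ValidL R cap s := by
  intro s
  induction s with
  | nil => intro cap _ _; exact trivial
  | cons c l ih =>
    intro cap hd hh
    refine ⟨by simpa using hh (by simp), ih ?_ ?_⟩
    · intro i hi
      have := hd (i+1) (by simpa using hi)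
      simpa using this
    · intro hl
      rcases l with _ | ⟨c', l'⟩
      · simp at hl
      · simpa using hd 0 (by simp)

section
variable (T : Set (List ℕ))

noncomputable def kbMeasure (R : ℕ → Ordinal.{0}) (β : Ordinal.{0}) (x : ℕ) : Ordinal :=
  gfun R β ((Encodable.decode (α := List ℕ) x).getD [])

theorem kb_wf (R : ℕ → Ordinal.{0}) (β : Ordinal.{0}) (hval : ∀ s ∈ T, ValidL R β s) :
    WellFounded (Subrel (kbRel T) (listCode '' T)) := by
  have key : ∀ x y : {n // n ∈ listCode '' T}, Subrel (kbRel T) (listCode '' T) x y →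
      kbMeasure R β x.1 < kbMeasure R β y.1 := by
    rintro x y ⟨s, hs, t, ht, he1, he2, hkb⟩
    have d1 : (Encodable.decode (α := List ℕ) x.1) = some s := by
      rw [← he1]; exact Encodable.encodek s
    have d2 : (Encodable.decode (α := List ℕ) y.1) = some t := by
      rw [← he2]; exact Encodable.encodek t
    unfold kbMeasure
    rw [d1, d2]
    exact gfun_mono R (hval s hs) (hval t ht) hkb
  exact Subrelation.wf (fun {x y} h => key x y h) (InvImage.wf _ Ordinal.lt_wf)

theorem kb_type_le (R : ℕ → Ordinal.{0}) (β : Ordinal.{0}) (hval : ∀ s ∈ T, ValidL R β s)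
    [inst : IsWellOrder (Subtype (listCode '' T)) (Subrel (kbRel T) (listCode '' T))] :
    type (Subrel (kbRel T) (listCode '' T)) ≤ ω ^ (β + 1) + 1 := by
  have hm : ∀ a, typein (Subrel (kbRel T) (listCode '' T)) a ≤ kbMeasure R β a.1 := by
    refine typein_le_of_mono _ ?_
    rintro x y ⟨s, hs, t, ht, he1, he2, hkb⟩
    have d1 : (Encodable.decode (α := List ℕ) x.1) = some s := by
      rw [← he1]; exact Encodable.encodek s
    have d2 : (Encodable.decode (α := List ℕ) y.1) = some t := by
      rw [← he2]; exact Encodable.encodek t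
    unfold kbMeasure
    rw [d1, d2]
    exact gfun_mono R (hval s hs) (hval t ht) hkb
  refine type_le_of_typein_lt ?_
  intro a
  refine lt_of_le_of_lt (hm a) ?_
  obtain ⟨s, hs, he⟩ := a.2
  have : (Encodable.decode (α := List ℕ) a.1) = some s := by
    rw [← he]; exact Encodable.encodek s
  unfold kbMeasure
  rw [this]
  exact lt_of_le_of_lt ((gfun_le R (hval s hs)).1) (lt_add_one _)
end

section
variable (T : Set (List ℕ))
  [inst : IsWellOrder (Subtype (listCode '' T)) (Subrel (kbRel T) (listCode '' T))]

open Classical in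
noncomputable def tau (t : List ℕ) : Ordinal.{0} :=
  if h : t ∈ T then typein (Subrel (kbRel T) (listCode '' T)) ⟨listCode t, ⟨t, h, rfl⟩⟩ else 0

theorem tau_lt {t s : List ℕ} (ht : t ∈ T) (hs : s ∈ T) (hkb : KB t s) :
    tau T t < tau T s := by
  rw [tau, tau, dif_pos ht, dif_pos hs]
  exact (typein_lt_typein _).mpr ⟨t, ht, s, hs, rfl, rfl, hkb⟩

theorem tau_lt_type {t : List ℕ} (ht : t ∈ T) :
    tau T t < type (Subrel (kbRel T) (listCode '' T)) := by
  rw [tau, dif_pos ht]; exact typein_lt_type _ _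

theorem kb_lower_core (chainP : List ℕ → Prop) (cap : List ℕ → Ordinal.{0})
    (hchainT : ∀ s, chainP s → s ∈ T)
    (hext : ∀ s, chainP s → ∀ γ, γ < cap s → ∀ M : ℕ, ∃ c : ℕ,
      M < c ∧ chainP (s ++ [c]) ∧ γ ≤ cap (s ++ [c])) :
    ∀ γ (s : List ℕ), chainP s → γ ≤ cap s → ∀ o : Ordinal,
      (o = 0 ∨ ∃ t ∈ T, (∀ d ∈ T, s <+: d → KB t d) ∧ o = tau T t + 1) →
      o + ω ^ γ ≤ tau T s + 1 := by
  intro γ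
  induction γ using Ordinal.induction with
  | h γ IH =>
    intro s hs hγ o ho
    rcases zero_or_succ_or_isSuccLimit γ with rfl | ⟨γ', rfl⟩ | hlim
    · -- zero case
      rw [opow_zero]
      rcases ho with rfl | ⟨t, ht, hbel, rfl⟩
      · simpa using le_add_left 1 (tau T s)
      · have h1 : tau T t < tau T s :=
          tau_lt T ht (hchainT s hs) (hbel s (hchainT s hs) (List.prefix_refl s))
        exact add_le_add_left (Order.add_one_le_iff.mpr h1) 1
    · -- successor case
      have hγ'lt : γ' < succ γ' := lt_succ γ'
      have hγ'cap : γ' < cap s := lt_of_lt_of_le hγ'lt hγ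
      have hbelow : ∀ c : ℕ, (o = 0 ∨ ∃ t ∈ T, (∀ d ∈ T, (s ++ [c]) <+: d → KB t d) ∧ o = tau T t + 1) := by
        intro c
        rcases ho with rfl | ⟨t, ht, hbel, rfl⟩
        · exact Or.inl rfl
        · refine Or.inr ⟨t, ht, fun d hd hpre => hbel d hd ((List.prefix_append s [c]).trans hpre), rfl⟩
      have hrec : ∀ m : ℕ, ∃ c : ℕ, chainP (s ++ [c]) ∧ γ' ≤ cap (s ++ [c]) ∧
          o + ω ^ γ' * ((m : Ordinal) + 1) ≤ tau T (s ++ [c]) + 1 := by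
        intro m
        induction m with
        | zero =>
          obtain ⟨c, -, hc1, hc2⟩ := hext s hs γ' hγ'cap 0
          refine ⟨c, hc1, hc2, ?_⟩
          have := IH γ' hγ'lt (s ++ [c]) hc1 hc2 o (hbelow c)
          simpa using this
        | succ m ihm =>
          obtain ⟨c, hc1, hc2, hc3⟩ := ihm
          obtain ⟨c', hcc', hc1', hc2'⟩ := hext s hs γ' hγ'cap c
          refine ⟨c', hc1', hc2', ?_⟩
          have hbel' : ∀ d ∈ T, (s ++ [c']) <+: d → KB (s ++ [c]) d := by
            intro d hd hpre
            obtain ⟨e, rfl⟩ := hpre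
            rw [List.append_assoc, List.singleton_append]
            exact kb_append_lt hcc' s e
          have hstep := IH γ' hγ'lt (s ++ [c']) hc1' hc2' (tau T (s ++ [c]) + 1)
            (Or.inr ⟨s ++ [c], hchainT _ hc1, hbel', rfl⟩)
          calc o + ω ^ γ' * (((m : Ordinal) + 1) + 1)
              = (o + ω ^ γ' * ((m : Ordinal) + 1)) + ω ^ γ' := by
                rw [mul_add_one, add_assoc]
            _ ≤ (tau T (s ++ [c]) + 1) + ω ^ γ' := add_le_add_left hc3 _
            _ ≤ tau T (s ++ [c']) + 1 := hstep
      have hlim2 : IsSuccLimit (ω ^ (succ γ')) :=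
        isSuccLimit_opow_left isSuccLimit_omega0 (succ_ne_zero γ')
      refine (add_le_iff_of_isSuccLimit hlim2).mpr ?_
      intro b' hb'
      have hb2 : b' < ω ^ γ' * ω := by
        rwa [opow_succ] at hb'
      obtain ⟨x, hx, hb'x⟩ := (lt_mul_iff_of_isSuccLimit isSuccLimit_omega0).mp hb2
      obtain ⟨m, rfl⟩ := lt_omega0.mp hx
      obtain ⟨c, hc1, hc2, hc3⟩ := hrec m
      have h4 : tau T (s ++ [c]) + 1 ≤ tau T s + 1 := by
        refine add_le_add_left (le_of_lt ?_) 1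
        exact tau_lt T (hchainT _ hc1) (hchainT s hs) (kb_ext (by simp) s)
      calc o + b' ≤ o + ω ^ γ' * ((m : Ordinal) + 1) := by
            refine add_le_add_right (le_of_lt (lt_of_lt_of_le hb'x ?_)) o
            exact mul_le_mul_right (le_of_lt (lt_add_one _)) _
        _ ≤ tau T (s ++ [c]) + 1 := hc3
        _ ≤ tau T s + 1 := h4
    · -- limit case
      refine (add_le_iff_of_isSuccLimit (isSuccLimit_opow_left isSuccLimit_omega0 hlim.pos.ne')).mpr ?_
      intro b' hb'
      obtain ⟨γ', hγ'γ, hb'γ'⟩ := (lt_opow_of_isSuccLimit omega0_ne_zero hlim).mp hb'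
      have := IH γ' hγ'γ s hs (le_of_lt (lt_of_lt_of_le hγ'γ hγ)) o ho
      exact le_trans (add_le_add_right (le_of_lt hb'γ') o) this

theorem kb_lower (chainP : List ℕ → Prop) (cap : List ℕ → Ordinal.{0})
    (hchainT : ∀ s, chainP s → s ∈ T)
    (hext : ∀ s, chainP s → ∀ γ, γ < cap s → ∀ M : ℕ, ∃ c : ℕ,
      M < c ∧ chainP (s ++ [c]) ∧ γ ≤ cap (s ++ [c]))
    (h0 : chainP []) {δ : Ordinal} (hδ0 : δ ≠ 0) (hδ : δ ≤ cap []) :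
    ω ^ δ < type (Subrel (kbRel T) (listCode '' T)) := by
  have h1 : ω ^ δ ≤ tau T [] + 1 := by
    simpa using kb_lower_core T chainP cap hchainT hext δ [] h0 hδ 0 (Or.inl rfl)
  have hlim : IsSuccLimit (ω ^ δ) := isSuccLimit_opow_left isSuccLimit_omega0 hδ0
  have h2 : ω ^ δ ≤ tau T [] := by
    by_contra hc
    push_neg at hc
    have := hlim.succ_lt hc
    rw [← add_one_eq_succ] at this
    exact absurd h1 (not_le.mpr this)
  exact lt_of_le_of_lt h2 (tau_lt_type T (hchainT [] h0))
end

theorem mem_DDT_nil {X Y : Set ℕ} {rX rY : ℕ → ℕ → Prop} : [] ∈ DDT X Y rX rY :=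
  ⟨fun i h => by simp at h, fun i h => by simp at h⟩

theorem DDT_append {X Y : Set ℕ} {rX rY : ℕ → ℕ → Prop} {s : List ℕ}
    (hs : s ∈ DDT X Y rX rY) {c : ℕ}
    (hc1 : (Nat.unpair c).1 ∈ X) (hc2 : (Nat.unpair c).2 ∈ Y)
    (hlast : s ≠ [] → rX (Nat.unpair c).1 (Nat.unpair (s.getD (s.length - 1) 0)).1 ∧
                      rY (Nat.unpair c).2 (Nat.unpair (s.getD (s.length - 1) 0)).2) :
    s ++ [c] ∈ DDT X Y rX rY := by
  obtain ⟨h1, h2⟩ := hs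
  have hget : ∀ i, i < s.length → (s ++ [c]).getD i 0 = s.getD i 0 := fun i h =>
    List.getD_append _ _ _ _ h
  have hgetc : (s ++ [c]).getD s.length 0 = c := by
    rw [List.getD_append_right _ _ _ _ (le_refl _)]
    simp
  constructor
  · intro i hi
    rw [List.length_append, List.length_singleton] at hi
    rcases Nat.lt_or_ge i s.length with h | h
    · rw [hget i h]; exact h1 i h
    · have : i = s.length := by omega
      subst this; rw [hgetc]; exact ⟨hc1, hc2⟩
  · intro i hi
    rw [List.length_append, List.length_singleton] at hi
    rcases Nat.lt_or_ge (i + 1) s.length with h | h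
    · rw [hget (i+1) h, hget i (by omega)]; exact h2 i h
    · have hi1 : i + 1 = s.length := by omega
      have hs0 : s ≠ [] := by
        intro e; rw [e] at hi1; simp at hi1
      have hieq : i = s.length - 1 := by omega
      rw [hi1, hgetc, hget i (by omega), hieq]
      exact hlast hs0

theorem getD_last_append (s : List ℕ) (c : ℕ) :
    (s ++ [c]).getD ((s ++ [c]).length - 1) 0 = c := by
  have : (s ++ [c]).length - 1 = s.length := by simp
  rw [this, List.getD_append_right _ _ _ _ (le_refl _)]
  simp

theorem exists_large {g : ℕ → ℕ} (hg : Function.Injective g) (M N : ℕ) :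
    ∃ j, N ≤ j ∧ M < g j := by
  have hfin : ({j | g j ≤ M} ∪ {j | j < N}).Finite := by
    refine Set.Finite.union ?_ (Set.finite_Iio N)
    have : {j | g j ≤ M} = g ⁻¹' (Set.Iic M) := rfl
    rw [this]
    exact Set.Finite.preimage (Set.injOn_of_injective hg) (Set.finite_Iic M)
  obtain ⟨j, hj⟩ := hfin.infinite_compl.nonempty
  simp only [Set.mem_compl_iff, Set.mem_union, Set.mem_setOf_eq, not_or, not_le, not_lt] at hj
  exact ⟨j, hj.2, hj.1⟩

theorem chain_desc {C : NatOrd} (hC : IsLinN C) {f : ℕ → ℕ} (hf : ∀ j, f j ∈ C.1)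
    (hd : ∀ j, C.2 (f (j + 1)) (f j)) : ∀ {j k : ℕ}, j < k → C.2 (f k) (f j) := by
  intro j k h
  induction k, h using Nat.le_induction with
  | base => exact hd j
  | succ k hk ih => exact hC.1 _ (hf (k+1)) _ (hf k) _ (hf j) (hd k) ih

theorem chain_inj {C : NatOrd} (hC : IsLinN C) {f : ℕ → ℕ} (hf : ∀ j, f j ∈ C.1)
    (hd : ∀ j, C.2 (f (j + 1)) (f j)) : Function.Injective f := by
  intro a b hab
  by_contra hne
  rcases Nat.lt_or_ge a b with h | h
  · have := chain_desc hC hf hd h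
    rw [hab] at this
    exact hC.2.1 _ (hf b) this
  · have h' : b < a := by omega
    have := chain_desc hC hf hd h'
    rw [hab] at this
    exact hC.2.1 _ (hf b) this

theorem kb_lower_master (T : Set (List ℕ))
    [instKB : IsWellOrder (Subtype (listCode '' T)) (Subrel (kbRel T) (listCode '' T))]
    (W C : NatOrd) [instW : IsWellOrder (Subtype (W.1)) (Subrel W.2 W.1)]
    (mk : ℕ → ℕ → ℕ) (pW pC : ℕ → ℕ)
    (hp : ∀ w c, pW (mk w c) = w ∧ pC (mk w c) = c)
    (f : ℕ → ℕ) (hf : ∀ j, f j ∈ C.1) (hfd : ∀ {j k}, j < k → C.2 (f k) (f j))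
    (hfinj : Function.Injective f)
    (hmkinj : ∀ w, Function.Injective (mk w))
    (hnilT : [] ∈ T)
    (hextT : ∀ s ∈ T, ∀ w ∈ W.1, ∀ c ∈ C.1,
      (s ≠ [] → W.2 w (pW (s.getD (s.length - 1) 0)) ∧ C.2 c (pC (s.getD (s.length - 1) 0))) →
      s ++ [mk w c] ∈ T)
    (hne : (type (Subrel W.2 W.1)) ≠ 0) :
    ω ^ (type (Subrel W.2 W.1)) < type (Subrel (kbRel T) (listCode '' T)) := by
  classical
  set δ := type (Subrel W.2 W.1) with hδ
  set chainP : List ℕ → Prop := fun s => s ∈ T ∧ (s ≠ [] →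
    pW (s.getD (s.length - 1) 0) ∈ W.1 ∧ ∃ j, pC (s.getD (s.length - 1) 0) = f j) with hcP
  set cap : List ℕ → Ordinal.{0} := fun s =>
    if h : s ≠ [] ∧ pW (s.getD (s.length - 1) 0) ∈ W.1
    then typein (Subrel W.2 W.1) ⟨_, h.2⟩ else δ with hcap
  have capNil : cap [] = δ := by
    simp only [hcap]
    exact dif_neg (fun h => h.1 rfl)
  have capApp : ∀ (s : List ℕ) (w : ℕ) (hw : w ∈ W.1) (c' : ℕ),
      cap (s ++ [mk w c']) = typein (Subrel W.2 W.1) ⟨w, hw⟩ := by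
    intro s w hw c'
    have h1 : pW ((s ++ [mk w c']).getD ((s ++ [mk w c']).length - 1) 0) = w := by
      rw [getD_last_append]; exact (hp w c').1
    simp only [hcap]
    rw [dif_pos ⟨by simp, by rw [h1]; exact hw⟩]
    congr 1
    exact Subtype.ext h1
  refine kb_lower T chainP cap (fun s hs => hs.1) ?_ ⟨hnilT, fun h => absurd rfl h⟩ hne (by rw [capNil])
  rintro s ⟨hsT, hlastP⟩ γ hγ M
  by_cases hsnil : s = []
  · subst hsnil
    have hγδ : γ < δ := by rwa [capNil] at hγ
    obtain ⟨b, hb⟩ := typein_surj (Subrel W.2 W.1) hγδ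
    obtain ⟨j, -, hcode⟩ := exists_large ((hmkinj b.1).comp hfinj) M 0
    refine ⟨mk b.1 (f j), by simpa using hcode, ⟨?_, ?_⟩, ?_⟩
    · exact hextT [] hnilT b.1 b.2 (f j) (hf j) (fun h => absurd rfl h)
    · intro _
      constructor
      · rw [getD_last_append [] (mk b.1 (f j)), (hp b.1 (f j)).1]; exact b.2
      · exact ⟨j, by rw [getD_last_append [] (mk b.1 (f j)), (hp b.1 (f j)).2]⟩
    · rw [capApp [] b.1 b.2 (f j)]
      rw [← hb]
  · obtain ⟨hWlast, j₀, hj₀⟩ := hlastP hsnil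
    have hcs : cap s = typein (Subrel W.2 W.1) ⟨_, hWlast⟩ := by
      simp only [hcap]; rw [dif_pos ⟨hsnil, hWlast⟩]
    have hγt : γ < typein (Subrel W.2 W.1) ⟨_, hWlast⟩ := hcs ▸ hγ
    obtain ⟨b, hb⟩ := typein_surj (Subrel W.2 W.1) (hγt.trans (typein_lt_type _ _))
    have hbrel : W.2 b.1 (pW (s.getD (s.length - 1) 0)) := by
      have := (typein_lt_typein (Subrel W.2 W.1) (a := b) (b := ⟨_, hWlast⟩)).mp
        (by rw [hb]; exact hγt)
      exact this
    obtain ⟨j, hj, hcode⟩ := exists_large ((hmkinj b.1).comp hfinj) M (j₀ + 1)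
    refine ⟨mk b.1 (f j), by simpa using hcode, ⟨?_, ?_⟩, ?_⟩
    · refine hextT s hsT b.1 b.2 (f j) (hf j) (fun _ => ⟨hbrel, ?_⟩)
      rw [hj₀]
      exact hfd (by omega)
    · intro _
      constructor
      · rw [getD_last_append s (mk b.1 (f j)), (hp b.1 (f j)).1]; exact b.2
      · exact ⟨j, by rw [getD_last_append s (mk b.1 (f j)), (hp b.1 (f j)).2]⟩
    · rw [capApp s b.1 b.2 (f j)]
      rw [← hb]

theorem unpair_ext {a b : ℕ} (h1 : a.unpair.1 = b.unpair.1) (h2 : a.unpair.2 = b.unpair.2) :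
    a = b := by
  have := Nat.pair_unpair a
  rw [← this, h1, h2, Nat.pair_unpair]

theorem isLinN_sigma {L : ℕ → NatOrd} (hL : ∀ n, IsLinN (L n)) : IsLinN (sigmaOrd L) := by
  refine ⟨?_, ?_, ?_⟩
  · rintro a ha b hb c hc (h | ⟨he, hr⟩) (h' | ⟨he', hr'⟩)
    · exact Or.inl (h.trans h')
    · exact Or.inl (he' ▸ h)
    · exact Or.inl (he ▸ h')
    · refine Or.inr ⟨he.trans he', ?_⟩
      have hb' : b.unpair.2 ∈ (L a.unpair.1).1 := by rw [he]; exact hb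
      have hc' : c.unpair.2 ∈ (L a.unpair.1).1 := by rw [he.trans he']; exact hc
      refine (hL a.unpair.1).1 _ ha _ hb' _ hc' hr ?_
      rw [he]; exact hr'
  · rintro a ha (h | ⟨-, hr⟩)
    · omega
    · exact (hL a.unpair.1).2.1 _ ha hr
  · intro a ha b hb
    rcases Nat.lt_trichotomy a.unpair.1 b.unpair.1 with h | h | h
    · exact Or.inl (Or.inl h)
    · have hb' : b.unpair.2 ∈ (L a.unpair.1).1 := by rw [h]; exact hb
      rcases (hL a.unpair.1).2.2 _ ha _ hb' with h' | h' | h'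
      · exact Or.inl (Or.inr ⟨h, h'⟩)
      · exact Or.inr (Or.inl (unpair_ext h h'))
      · exact Or.inr (Or.inr (Or.inr ⟨h.symm, by rw [← h]; exact h'⟩))
    · exact Or.inr (Or.inr (Or.inl h))

theorem wf_and_mem {r : ℕ → ℕ → Prop} {X : Set ℕ} (h : WellFounded (Subrel r X)) :
    WellFounded (fun a b => r a b ∧ a ∈ X ∧ b ∈ X) := by
  constructor
  intro a
  by_cases ha : a ∈ X
  · have key : ∀ (p : {x // x ∈ X}), Acc (Subrel r X) p →
        Acc (fun a b => r a b ∧ a ∈ X ∧ b ∈ X) p.1 := by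
      intro p hp
      induction hp with
      | intro p hp ih =>
        constructor
        rintro y ⟨hy1, hy2, -⟩
        exact ih ⟨y, hy2⟩ hy1
    exact key ⟨a, ha⟩ (h.apply _)
  · constructor
    rintro y ⟨-, -, hmem⟩
    exact absurd hmem ha

theorem wfn_sigma {L : ℕ → NatOrd} (hL : ∀ n, WFN (L n)) : WFN (sigmaOrd L) := by
  have hwf : WellFounded (PSigma.Lex (α := ℕ) (β := fun _ => ℕ) (· < ·)
      (fun n => fun a b => (L n).2 a b ∧ a ∈ (L n).1 ∧ b ∈ (L n).1)) :=
    WellFounded.psigma_lex (Nat.lt_wfRel.wf) (fun n => wf_and_mem (hL n))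
  have : Subrelation (Subrel (sigmaOrd L).2 (sigmaOrd L).1)
      (InvImage (PSigma.Lex (α := ℕ) (β := fun _ => ℕ) (· < ·)
        (fun n => fun a b => (L n).2 a b ∧ a ∈ (L n).1 ∧ b ∈ (L n).1))
        (fun x => ⟨x.1.unpair.1, x.1.unpair.2⟩)) := by
    rintro x y (h | ⟨he, hr⟩)
    · exact PSigma.Lex.left _ _ h
    · have key : PSigma.Lex (α := ℕ) (β := fun _ => ℕ) (· < ·)
          (fun n => fun a b => (L n).2 a b ∧ a ∈ (L n).1 ∧ b ∈ (L n).1)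
          ⟨y.1.unpair.1, x.1.unpair.2⟩ ⟨y.1.unpair.1, y.1.unpair.2⟩ := by
        refine PSigma.Lex.right _ ⟨?_, ?_, y.2⟩
        · rw [← he]; exact hr
        · rw [← he]; exact x.2
      have hx : (⟨x.1.unpair.1, x.1.unpair.2⟩ : PSigma (fun _ : ℕ => ℕ)) =
          ⟨y.1.unpair.1, x.1.unpair.2⟩ := by rw [he]
      rw [InvImage, hx]
      exact key
  exact Subrelation.wf this (InvImage.wf _ hwf)

theorem isLinN_add {A B : NatOrd} (hA : IsLinN A) (hB : IsLinN B) : IsLinN (addOrd A B) := by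
  refine ⟨?_, ?_, ?_⟩
  · rintro a ha b hb c hc (h | ⟨ha0, hb0, hr⟩ | ⟨ha1, hb1, hr⟩) (h' | ⟨hb0', hc0, hr'⟩ | ⟨hb1', hc1, hr'⟩)
    · exact Or.inl (h.trans h')
    · exact Or.inl (by omega)
    · exact Or.inl (by omega)
    · exact Or.inl (by omega)
    · refine Or.inr (Or.inl ⟨ha0, hc0, ?_⟩)
      have hma : a.unpair.2 ∈ A.1 := by rcases ha with ⟨-, h⟩ | ⟨h1, -⟩; exact h; omega
      have hmb : b.unpair.2 ∈ A.1 := by rcases hb with ⟨-, h⟩ | ⟨h1, -⟩; exact h; omega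
      have hmc : c.unpair.2 ∈ A.1 := by rcases hc with ⟨-, h⟩ | ⟨h1, -⟩; exact h; omega
      exact hA.1 _ hma _ hmb _ hmc hr hr'
    · exact Or.inl (by omega)
    · exact Or.inl (by omega)
    · exact Or.inl (by omega)
    · refine Or.inr (Or.inr ⟨ha1, hc1, ?_⟩)
      have hma : a.unpair.2 ∈ B.1 := by rcases ha with ⟨h1, -⟩ | ⟨-, h⟩; omega; exact h
      have hmb : b.unpair.2 ∈ B.1 := by rcases hb with ⟨h1, -⟩ | ⟨-, h⟩; omega; exact h
      have hmc : c.unpair.2 ∈ B.1 := by rcases hc with ⟨h1, -⟩ | ⟨-, h⟩; omega; exact h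
      exact hB.1 _ hma _ hmb _ hmc hr hr'
  · rintro a ha (h | ⟨h0, -, hr⟩ | ⟨h1, -, hr⟩)
    · omega
    · have hma : a.unpair.2 ∈ A.1 := by
        rcases ha with ⟨-, h⟩ | ⟨h1', -⟩
        · exact h
        · omega
      exact hA.2.1 _ hma hr
    · have hma : a.unpair.2 ∈ B.1 := by
        rcases ha with ⟨h0', -⟩ | ⟨-, h⟩
        · omega
        · exact h
      exact hB.2.1 _ hma hr
  · intro a ha b hb
    rcases ha with ⟨ha0, hma⟩ | ⟨ha1, hma⟩ <;> rcases hb with ⟨hb0, hmb⟩ | ⟨hb1, hmb⟩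
    · rcases hA.2.2 _ hma _ hmb with h | h | h
      · exact Or.inl (Or.inr (Or.inl ⟨ha0, hb0, h⟩))
      · exact Or.inr (Or.inl (unpair_ext (by omega) h))
      · exact Or.inr (Or.inr (Or.inr (Or.inl ⟨hb0, ha0, h⟩)))
    · exact Or.inl (Or.inl (by omega))
    · exact Or.inr (Or.inr (Or.inl (by omega)))
    · rcases hB.2.2 _ hma _ hmb with h | h | h
      · exact Or.inl (Or.inr (Or.inr ⟨ha1, hb1, h⟩))
      · exact Or.inr (Or.inl (unpair_ext (by omega) h))
      · exact Or.inr (Or.inr (Or.inr (Or.inr ⟨hb1, ha1, h⟩)))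

theorem wfn_add {A B : NatOrd} (hA : WFN A) (hB : WFN B) : WFN (addOrd A B) := by
  set sfam : ℕ → ℕ → ℕ → Prop := fun n a b =>
    (n = 0 ∧ (A.2 a b ∧ a ∈ A.1 ∧ b ∈ A.1)) ∨ (n = 1 ∧ (B.2 a b ∧ a ∈ B.1 ∧ b ∈ B.1)) with hsfam
  have hwfam : ∀ n, WellFounded (sfam n) := by
    intro n
    rcases Nat.lt_trichotomy n 1 with h | h | h
    · have h0 : n = 0 := by omega
      refine Subrelation.wf (r := fun a b => A.2 a b ∧ a ∈ A.1 ∧ b ∈ A.1) ?_ (wf_and_mem hA)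
      rintro x y (⟨-, h⟩ | ⟨h1, -⟩)
      · exact h
      · omega
    · refine Subrelation.wf (r := fun a b => B.2 a b ∧ a ∈ B.1 ∧ b ∈ B.1) ?_ (wf_and_mem hB)
      rintro x y (⟨h0, -⟩ | ⟨-, h'⟩)
      · omega
      · exact h'
    · constructor
      intro a
      constructor
      rintro y (⟨h0, -⟩ | ⟨h1, -⟩) <;> omega
  have hwf : WellFounded (PSigma.Lex (α := ℕ) (β := fun _ => ℕ) (· < ·) sfam) :=
    WellFounded.psigma_lex (Nat.lt_wfRel.wf) hwfam
  have hsub : Subrelation (Subrel (addOrd A B).2 (addOrd A B).1)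
      (InvImage (PSigma.Lex (α := ℕ) (β := fun _ => ℕ) (· < ·) sfam)
        (fun x => ⟨x.1.unpair.1, x.1.unpair.2⟩)) := by
    rintro x y (h | ⟨hx0, hy0, hr⟩ | ⟨hx1, hy1, hr⟩)
    · exact PSigma.Lex.left _ _ h
    · have hmx : x.1.unpair.2 ∈ A.1 := by
        rcases x.2 with ⟨-, h'⟩ | ⟨h1', -⟩
        · exact h'
        · omega
      have hmy : y.1.unpair.2 ∈ A.1 := by
        rcases y.2 with ⟨-, h'⟩ | ⟨h1', -⟩
        · exact h'
        · omega
      have key : PSigma.Lex (α := ℕ) (β := fun _ => ℕ) (· < ·) sfam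
          ⟨y.1.unpair.1, x.1.unpair.2⟩ ⟨y.1.unpair.1, y.1.unpair.2⟩ :=
        PSigma.Lex.right _ (Or.inl ⟨hy0, hr, hmx, hmy⟩)
      have hx : (⟨x.1.unpair.1, x.1.unpair.2⟩ : PSigma (fun _ : ℕ => ℕ)) =
          ⟨y.1.unpair.1, x.1.unpair.2⟩ := by rw [hx0, hy0]
      rw [InvImage, hx]
      exact key
    · have hmx : x.1.unpair.2 ∈ B.1 := by
        rcases x.2 with ⟨h0', -⟩ | ⟨-, h'⟩
        · omega
        · exact h'
      have hmy : y.1.unpair.2 ∈ B.1 := by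
        rcases y.2 with ⟨h0', -⟩ | ⟨-, h'⟩
        · omega
        · exact h'
      have key : PSigma.Lex (α := ℕ) (β := fun _ => ℕ) (· < ·) sfam
          ⟨y.1.unpair.1, x.1.unpair.2⟩ ⟨y.1.unpair.1, y.1.unpair.2⟩ :=
        PSigma.Lex.right _ (Or.inr ⟨hy1, hr, hmx, hmy⟩)
      have hx : (⟨x.1.unpair.1, x.1.unpair.2⟩ : PSigma (fun _ : ℕ => ℕ)) =
          ⟨y.1.unpair.1, x.1.unpair.2⟩ := by rw [hx1, hy1]
      rw [InvImage, hx]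
      exact key
  exact Subrelation.wf hsub (InvImage.wf _ hwf)

theorem type_summand_lt (L : ℕ → NatOrd) (n : ℕ) {w : ℕ} (hw : w ∈ (L (n+1)).1)
    [instS : IsWellOrder (Subtype ((sigmaOrd L).1)) (Subrel (sigmaOrd L).2 (sigmaOrd L).1)]
    [instn : IsWellOrder (Subtype ((L n).1)) (Subrel (L n).2 (L n).1)] :
    type (Subrel (L n).2 (L n).1) < type (Subrel (sigmaOrd L).2 (sigmaOrd L).1) := by
  have htop : Nat.pair (n+1) w ∈ (sigmaOrd L).1 := by
    simp only [sigmaOrd, Set.mem_setOf_eq, Nat.unpair_pair]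
    exact hw
  refine lt_of_le_of_lt ?_ (typein_lt_type _ ⟨Nat.pair (n+1) w, htop⟩)
  rw [← type_subrel]
  have e : Subrel (L n).2 (L n).1 ↪r
      Subrel (Subrel (sigmaOrd L).2 (sigmaOrd L).1)
        {b | Subrel (sigmaOrd L).2 (sigmaOrd L).1 b ⟨Nat.pair (n+1) w, htop⟩} := by
    have hmem : ∀ a : {x // x ∈ (L n).1}, Nat.pair n a.1 ∈ (sigmaOrd L).1 := by
      intro a
      simp only [sigmaOrd, Set.mem_setOf_eq, Nat.unpair_pair]
      exact a.2
    have hrel : ∀ a : {x // x ∈ (L n).1},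
        (sigmaOrd L).2 (Nat.pair n a.1) (Nat.pair (n+1) w) := by
      intro a
      simp only [sigmaOrd, Nat.unpair_pair]
      exact Or.inl (by omega)
    refine RelEmbedding.mk ⟨fun a => ⟨⟨Nat.pair n a.1, hmem a⟩, hrel a⟩, ?_⟩ ?_
    · intro a b hab
      have : Nat.pair n a.1 = Nat.pair n b.1 := by
        simpa using congrArg (fun x => x.1.1) hab
      exact Subtype.ext (Nat.pair_eq_pair.mp this).2
    · intro a b
      show (sigmaOrd L).2 (Nat.pair n a.1) (Nat.pair n b.1) ↔ (L n).2 a.1 b.1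
      simp only [sigmaOrd, Nat.unpair_pair]
      constructor
      · rintro (h | ⟨-, h⟩)
        · omega
        · exact h
      · intro h
        exact Or.inr ⟨trivial, h⟩
  exact type_le_iff'.mpr ⟨e⟩

theorem type_left_lt_add (A B : NatOrd) {x₀ : ℕ} (hx₀ : x₀ ∈ B.1)
    [instS : IsWellOrder (Subtype ((addOrd A B).1)) (Subrel (addOrd A B).2 (addOrd A B).1)]
    [instA : IsWellOrder (Subtype (A.1)) (Subrel A.2 A.1)] :
    type (Subrel A.2 A.1) < type (Subrel (addOrd A B).2 (addOrd A B).1) := by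
  have htop : Nat.pair 1 x₀ ∈ (addOrd A B).1 := by
    exact Or.inr ⟨by rw [Nat.unpair_pair], by rw [Nat.unpair_pair]; exact hx₀⟩
  refine lt_of_le_of_lt ?_ (typein_lt_type _ ⟨Nat.pair 1 x₀, htop⟩)
  rw [← type_subrel]
  have e : Subrel A.2 A.1 ↪r
      Subrel (Subrel (addOrd A B).2 (addOrd A B).1)
        {b | Subrel (addOrd A B).2 (addOrd A B).1 b ⟨Nat.pair 1 x₀, htop⟩} := by
    have hmem : ∀ a : {x // x ∈ A.1}, Nat.pair 0 a.1 ∈ (addOrd A B).1 := by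
      intro a
      exact Or.inl ⟨by rw [Nat.unpair_pair], by rw [Nat.unpair_pair]; exact a.2⟩
    have hrel : ∀ a : {x // x ∈ A.1},
        (addOrd A B).2 (Nat.pair 0 a.1) (Nat.pair 1 x₀) := by
      intro a
      simp only [addOrd, Nat.unpair_pair]
      exact Or.inl (by omega)
    refine RelEmbedding.mk ⟨fun a => ⟨⟨Nat.pair 0 a.1, hmem a⟩, hrel a⟩, ?_⟩ ?_
    · intro a b hab
      have : Nat.pair 0 a.1 = Nat.pair 0 b.1 := by
        simpa using congrArg (fun x => x.1.1) hab
      exact Subtype.ext (Nat.pair_eq_pair.mp this).2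
    · intro a b
      show (addOrd A B).2 (Nat.pair 0 a.1) (Nat.pair 0 b.1) ↔ A.2 a.1 b.1
      simp only [addOrd, Nat.unpair_pair]
      constructor
      · rintro (h | ⟨-, -, h⟩ | ⟨h, -⟩)
        · omega
        · exact h
        · omega
      · intro h
        exact Or.inr (Or.inl ⟨trivial, trivial, h⟩)
  exact type_le_iff'.mpr ⟨e⟩

theorem mkIWO {A : NatOrd} (h1 : IsLinN A) (h2 : WFN A) :
    IsWellOrder (Subtype (A.1)) (Subrel A.2 A.1) := by
  letI t1 : IsTrichotomous (Subtype (A.1)) (Subrel A.2 A.1) := ⟨by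
    intro a b
    intro hab hba; rcases h1.2.2 a.1 a.2 b.1 b.2 with h | h | h
    · exact absurd h hab
    · exact Subtype.ext h
    · exact absurd h hba⟩
  letI t2 : IsTrans (Subtype (A.1)) (Subrel A.2 A.1) :=
    ⟨fun a b c hab hbc => h1.1 a.1 a.2 b.1 b.2 c.1 c.2 hab hbc⟩
  letI t3 : IsWellFounded (Subtype (A.1)) (Subrel A.2 A.1) := ⟨h2⟩
  exact ⟨⟩

theorem isLinN_rat (q : ℕ → ℚ) (hq : Function.Bijective q) : IsLinN (ratOrd q) := by
  refine ⟨fun a _ b _ c _ h h' => h.trans h', fun a _ => lt_irrefl _, fun a _ b _ => ?_⟩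
  rcases lt_trichotomy (q a) (q b) with h | h | h
  · exact Or.inl h
  · exact Or.inr (Or.inl (hq.1 h))
  · exact Or.inr (Or.inr h)

noncomputable def ratChain (q : ℕ → ℚ) (j : ℕ) : ℕ := Function.invFun q (-(j : ℚ))

theorem ratChain_val (q : ℕ → ℚ) (hq : Function.Bijective q) (j : ℕ) :
    q (ratChain q j) = -(j : ℚ) := Function.rightInverse_invFun hq.2 _

theorem ratChain_desc (q : ℕ → ℚ) (hq : Function.Bijective q) {j k : ℕ} (h : j < k) :
    (ratOrd q).2 (ratChain q k) (ratChain q j) := by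
  show q _ < q _
  rw [ratChain_val q hq, ratChain_val q hq]
  have : (j : ℚ) < k := by exact_mod_cast h
  linarith

theorem ratChain_inj (q : ℕ → ℚ) (hq : Function.Bijective q) :
    Function.Injective (ratChain q) := by
  intro a b hab
  have : -(a : ℚ) = -(b : ℚ) := by
    rw [← ratChain_val q hq, ← ratChain_val q hq, hab]
  have : (a : ℚ) = b := by linarith
  exact_mod_cast this

theorem descChain_of_not_wf {A : NatOrd} (hlin : IsLinN A) (h : ¬ WFN A) :
    ∃ f : ℕ → ℕ, (∀ j, f j ∈ A.1) ∧ (∀ {j k : ℕ}, j < k → A.2 (f k) (f j)) ∧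
      Function.Injective f := by
  letI : IsIrrefl (Subtype (A.1)) (Subrel A.2 A.1) := ⟨fun a => hlin.2.1 a.1 a.2⟩
  letI : IsTrans (Subtype (A.1)) (Subrel A.2 A.1) :=
    ⟨fun a b c hab hbc => hlin.1 a.1 a.2 b.1 b.2 c.1 c.2 hab hbc⟩
  letI : IsStrictOrder (Subtype (A.1)) (Subrel A.2 A.1) := ⟨⟩
  rw [WFN, RelEmbedding.wellFounded_iff_isEmpty, not_isEmpty_iff] at h
  obtain ⟨emb⟩ := h
  refine ⟨fun j => (emb j).1, fun j => (emb j).2, ?_, ?_⟩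
  · intro j k hjk
    exact emb.map_rel_iff.mpr hjk
  · intro a b hab
    exact emb.injective (Subtype.ext hab)


-- ddStar wrappers

theorem isLinN_ddStar (A B : NatOrd) : IsLinN (ddStar A B) :=
  lin_kb (DDT A.1 B.1 A.2 B.2)

open Classical in
theorem ddt_validL_fst (A B : NatOrd) [instA : IsWellOrder (Subtype (A.1)) (Subrel A.2 A.1)] :
    ∀ s ∈ DDT A.1 B.1 A.2 B.2, ValidL
      (fun c => if h : (Nat.unpair c).1 ∈ A.1 then typein (Subrel A.2 A.1) ⟨_, h⟩ else 0)
      (type (Subrel A.2 A.1)) s := by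
  intro s hs
  refine valid_of_getD ?_ ?_
  · intro i hi
    have h1 := (hs.1 (i+1) (by omega)).1
    have h2 := (hs.1 i (by omega)).1
    simp only [dif_pos h1, dif_pos h2]
    exact (typein_lt_typein _).mpr ((hs.2 i hi).1)
  · intro hne
    have hlen : 0 < s.length := List.length_pos_iff.mpr hne
    have h1 := (hs.1 0 hlen).1
    simp only [dif_pos h1]
    exact typein_lt_type _ _

open Classical in
theorem ddt_validL_snd (A B : NatOrd) [instB : IsWellOrder (Subtype (B.1)) (Subrel B.2 B.1)] :
    ∀ s ∈ DDT A.1 B.1 A.2 B.2, ValidL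
      (fun c => if h : (Nat.unpair c).2 ∈ B.1 then typein (Subrel B.2 B.1) ⟨_, h⟩ else 0)
      (type (Subrel B.2 B.1)) s := by
  intro s hs
  refine valid_of_getD ?_ ?_
  · intro i hi
    have h1 := (hs.1 (i+1) (by omega)).2
    have h2 := (hs.1 i (by omega)).2
    simp only [dif_pos h1, dif_pos h2]
    exact (typein_lt_typein _).mpr ((hs.2 i hi).2)
  · intro hne
    have hlen : 0 < s.length := List.length_pos_iff.mpr hne
    have h1 := (hs.1 0 hlen).2
    simp only [dif_pos h1]
    exact typein_lt_type _ _

theorem ddStar_wf_fst (A B : NatOrd) [instA : IsWellOrder (Subtype (A.1)) (Subrel A.2 A.1)] :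
    WFN (ddStar A B) :=
  kb_wf (DDT A.1 B.1 A.2 B.2) _ _ (ddt_validL_fst A B)

theorem ddStar_wf_snd (A B : NatOrd) [instB : IsWellOrder (Subtype (B.1)) (Subrel B.2 B.1)] :
    WFN (ddStar A B) :=
  kb_wf (DDT A.1 B.1 A.2 B.2) _ _ (ddt_validL_snd A B)

theorem ddStar_type_le_snd (A B : NatOrd) [instB : IsWellOrder (Subtype (B.1)) (Subrel B.2 B.1)]
    [instKB : IsWellOrder (Subtype ((ddStar A B).1)) (Subrel (ddStar A B).2 (ddStar A B).1)] :
    type (Subrel (ddStar A B).2 (ddStar A B).1) ≤ ω ^ (type (Subrel B.2 B.1) + 1) + 1 :=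
  kb_type_le (DDT A.1 B.1 A.2 B.2) _ _ (ddt_validL_snd A B) (inst := instKB)

theorem ddStar_lower_fst (A B : NatOrd) [instA : IsWellOrder (Subtype (A.1)) (Subrel A.2 A.1)]
    [instKB : IsWellOrder (Subtype ((ddStar A B).1)) (Subrel (ddStar A B).2 (ddStar A B).1)]
    (f : ℕ → ℕ) (hf : ∀ j, f j ∈ B.1) (hfd : ∀ {j k : ℕ}, j < k → B.2 (f k) (f j))
    (hfinj : Function.Injective f) (hne : type (Subrel A.2 A.1) ≠ 0) :
    ω ^ type (Subrel A.2 A.1) < type (Subrel (ddStar A B).2 (ddStar A B).1) := by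
  refine kb_lower_master (DDT A.1 B.1 A.2 B.2) (instKB := instKB) A B
    (fun w c => Nat.pair w c) (fun x => x.unpair.1) (fun x => x.unpair.2)
    (fun w c => by simp)
    f hf hfd hfinj (fun w a b hab => (Nat.pair_eq_pair.mp hab).2) mem_DDT_nil ?_ hne
  intro s hs w hw c hc hlast
  refine DDT_append hs ?_ ?_ ?_
  · simpa using hw
  · simpa using hc
  · intro hne'
    have := hlast hne'
    simp only [Nat.unpair_pair]
    exact this

theorem ddStar_lower_snd (A B : NatOrd) [instB : IsWellOrder (Subtype (B.1)) (Subrel B.2 B.1)]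
    [instKB : IsWellOrder (Subtype ((ddStar A B).1)) (Subrel (ddStar A B).2 (ddStar A B).1)]
    (f : ℕ → ℕ) (hf : ∀ j, f j ∈ A.1) (hfd : ∀ {j k : ℕ}, j < k → A.2 (f k) (f j))
    (hfinj : Function.Injective f) (hne : type (Subrel B.2 B.1) ≠ 0) :
    ω ^ type (Subrel B.2 B.1) < type (Subrel (ddStar A B).2 (ddStar A B).1) := by
  refine kb_lower_master (DDT A.1 B.1 A.2 B.2) (instKB := instKB) B A
    (fun w c => Nat.pair c w) (fun x => x.unpair.2) (fun x => x.unpair.1)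
    (fun w c => by simp)
    f hf hfd hfinj (fun w a b hab => (Nat.pair_eq_pair.mp hab).1) mem_DDT_nil ?_ hne
  intro s hs w hw c hc hlast
  refine DDT_append hs ?_ ?_ ?_
  · simpa using hc
  · simpa using hw
  · intro hne'
    have := hlast hne'
    simp only [Nat.unpair_pair]
    exact ⟨this.2, this.1⟩

end ZordAux

open Ordinal Order in
/-- If `(X_n)`, `(Y_n)` are sequences of nonempty linear orders on
subsets of ℕ such that for every `n` at least one of `X_n`, `Y_n` is well-founded,
and `U = Σ_n (ℚ_q*Y_n)*X_n`, `Z_n = (U + X_n)*Y_n`, then each `Z_n` is a well order;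
if `X_n` is not well-founded then `|Z_n| < |U|`, and if `Y_n` is not well-founded then
`|U| < |Z_n|` (strict comparisons as principal segment embeddings). -/
theorem Zord_comparisons (q : ℕ → ℚ) (hq : Function.Bijective q)
    (X Y : ℕ → NatOrd) (hX : ∀ n, IsLinN (X n)) (hY : ∀ n, IsLinN (Y n))
    (hXne : ∀ n, (X n).1.Nonempty) (hYne : ∀ n, (Y n).1.Nonempty)
    (h : ∀ n, WFN (X n) ∨ WFN (Y n)) :
    ∀ n, IsWON (Zord q X Y n) ∧
      (¬WFN (X n) →
        Nonempty (PrincipalSeg (Subrel (Zord q X Y n).2 (Zord q X Y n).1)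
          (Subrel (Uord q X Y).2 (Uord q X Y).1))) ∧
      (¬WFN (Y n) →
        Nonempty (PrincipalSeg (Subrel (Uord q X Y).2 (Uord q X Y).1)
          (Subrel (Zord q X Y n).2 (Zord q X Y n).1))) := by
  classical
  intro n
  have hQlin : IsLinN (ratOrd q) := isLinN_rat q hq
  have hWlin : ∀ k, IsLinN (ddStar (ddStar (ratOrd q) (Y k)) (X k)) :=
    fun k => isLinN_ddStar _ _
  have hQYlin : ∀ k, IsLinN (ddStar (ratOrd q) (Y k)) := fun k => isLinN_ddStar _ _
  have hWwf : ∀ k, WFN (ddStar (ddStar (ratOrd q) (Y k)) (X k)) := by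
    intro k
    rcases h k with hk | hk
    · letI := mkIWO (hX k) hk
      exact ddStar_wf_snd _ (X k)
    · letI := mkIWO (hY k) hk
      have h1 : WFN (ddStar (ratOrd q) (Y k)) := ddStar_wf_snd _ (Y k)
      letI := mkIWO (hQYlin k) h1
      exact ddStar_wf_fst _ (X k)
  have hUlin : IsLinN (Uord q X Y) := isLinN_sigma hWlin
  have hUwf : WFN (Uord q X Y) := wfn_sigma hWwf
  letI instU := mkIWO hUlin hUwf
  have hZlin : IsLinN (Zord q X Y n) := isLinN_ddStar _ _
  have hZwf : WFN (Zord q X Y n) := by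
    rcases h n with hk | hk
    · have hAlin : IsLinN (addOrd (Uord q X Y) (X n)) := isLinN_add hUlin (hX n)
      have hAwf : WFN (addOrd (Uord q X Y) (X n)) := wfn_add hUwf hk
      letI := mkIWO hAlin hAwf
      exact ddStar_wf_fst _ (Y n)
    · letI := mkIWO (hY n) hk
      exact ddStar_wf_snd _ (Y n)
  letI instZ := mkIWO hZlin hZwf
  refine ⟨⟨hZlin, hZwf⟩, ?_, ?_⟩
  · -- ¬WFN (X n) → |Z n| < |U|
    intro hXnwf
    have hYwf : WFN (Y n) := (h n).resolve_left hXnwf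
    letI instY := mkIWO (hY n) hYwf
    have hQYwf : WFN (ddStar (ratOrd q) (Y n)) := ddStar_wf_snd _ (Y n)
    letI instQY := mkIWO (hQYlin n) hQYwf
    letI instW := mkIWO (hWlin n) (hWwf n)
    have hZle : type (Subrel (Zord q X Y n).2 (Zord q X Y n).1) ≤
        ω ^ (type (Subrel (Y n).2 (Y n).1) + 1) + 1 :=
      ddStar_type_le_snd _ (Y n) (instKB := instZ)
    have hYne0 : type (Subrel (Y n).2 (Y n).1) ≠ 0 :=
      type_ne_zero_iff_nonempty.mpr ⟨⟨(hYne n).choose, (hYne n).choose_spec⟩⟩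
    have hQYlow : ω ^ (type (Subrel (Y n).2 (Y n).1)) <
        type (Subrel (ddStar (ratOrd q) (Y n)).2 (ddStar (ratOrd q) (Y n)).1) :=
      ddStar_lower_snd (ratOrd q) (Y n) (instKB := instQY) (ratChain q)
        (fun j => Set.mem_univ _) (fun {j k} hjk => ratChain_desc q hq hjk)
        (ratChain_inj q hq) hYne0
    have hβδ : type (Subrel (Y n).2 (Y n).1) + 1 ≤
        type (Subrel (ddStar (ratOrd q) (Y n)).2 (ddStar (ratOrd q) (Y n)).1) := by
      rw [Order.add_one_le_iff]
      exact lt_of_le_of_lt (right_le_opow _ one_lt_omega0) hQYlow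
    obtain ⟨g, hg1, hg2, hg3⟩ := descChain_of_not_wf (hX n) hXnwf
    have hQYne0 : type (Subrel (ddStar (ratOrd q) (Y n)).2 (ddStar (ratOrd q) (Y n)).1) ≠ 0 :=
      type_ne_zero_iff_nonempty.mpr ⟨⟨listCode [], [], mem_DDT_nil, rfl⟩⟩
    have hWlow : ω ^ type (Subrel (ddStar (ratOrd q) (Y n)).2 (ddStar (ratOrd q) (Y n)).1) <
        type (Subrel (ddStar (ddStar (ratOrd q) (Y n)) (X n)).2
          (ddStar (ddStar (ratOrd q) (Y n)) (X n)).1) :=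
      ddStar_lower_fst (ddStar (ratOrd q) (Y n)) (X n) (instKB := instW)
        g hg1 (fun {j k} hjk => hg2 hjk) hg3 hQYne0
    have hWU : type (Subrel (ddStar (ddStar (ratOrd q) (Y n)) (X n)).2
          (ddStar (ddStar (ratOrd q) (Y n)) (X n)).1) <
        type (Subrel (Uord q X Y).2 (Uord q X Y).1) :=
      type_summand_lt (fun k => ddStar (ddStar (ratOrd q) (Y k)) (X k)) n
        (w := listCode []) ⟨[], mem_DDT_nil, rfl⟩ (instS := instU) (instn := instW)
    have final : type (Subrel (Zord q X Y n).2 (Zord q X Y n).1) <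
        type (Subrel (Uord q X Y).2 (Uord q X Y).1) := by
      refine lt_of_le_of_lt ?_ hWU
      refine hZle.trans ?_
      have h1 : ω ^ (type (Subrel (Y n).2 (Y n).1) + 1) ≤
          ω ^ (type (Subrel (ddStar (ratOrd q) (Y n)).2 (ddStar (ratOrd q) (Y n)).1)) :=
        opow_le_opow_right omega0_pos hβδ
      have h2 := Order.add_one_le_iff.mpr hWlow
      exact le_trans (add_le_add_left h1 1) h2
    exact type_lt_iff.mp final
  · -- ¬WFN (Y n) → |U| < |Z n|
    intro hYnwf
    have hXwf : WFN (X n) := (h n).resolve_right hYnwf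
    have hAlin : IsLinN (addOrd (Uord q X Y) (X n)) := isLinN_add hUlin (hX n)
    have hAwf : WFN (addOrd (Uord q X Y) (X n)) := wfn_add hUwf hXwf
    letI instA := mkIWO hAlin hAwf
    have hμα : type (Subrel (Uord q X Y).2 (Uord q X Y).1) <
        type (Subrel (addOrd (Uord q X Y) (X n)).2 (addOrd (Uord q X Y) (X n)).1) :=
      type_left_lt_add (Uord q X Y) (X n) (hXne n).choose_spec
        (instS := instA) (instA := instU)
    obtain ⟨g, hg1, hg2, hg3⟩ := descChain_of_not_wf (hY n) hYnwf
    have hαne : type (Subrel (addOrd (Uord q X Y) (X n)).2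
        (addOrd (Uord q X Y) (X n)).1) ≠ 0 := by
      refine type_ne_zero_iff_nonempty.mpr ⟨⟨Nat.pair 1 (hXne n).choose, ?_⟩⟩
      exact Or.inr ⟨by rw [Nat.unpair_pair], by rw [Nat.unpair_pair]; exact (hXne n).choose_spec⟩
    have hZlow : ω ^ type (Subrel (addOrd (Uord q X Y) (X n)).2
          (addOrd (Uord q X Y) (X n)).1) <
        type (Subrel (Zord q X Y n).2 (Zord q X Y n).1) :=
      ddStar_lower_fst (addOrd (Uord q X Y) (X n)) (Y n) (instKB := instZ)
        g hg1 (fun {j k} hjk => hg2 hjk) hg3 hαne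
    have final : type (Subrel (Uord q X Y).2 (Uord q X Y).1) <
        type (Subrel (Zord q X Y n).2 (Zord q X Y n).1) :=
      lt_of_lt_of_le (lt_of_lt_of_le hμα (right_le_opow _ one_lt_omega0)) (le_of_lt hZlow)
    exact type_lt_iff.mp final
end

section
/- For every nonempty well-founded tree T on ℕ (a tree with no branch), the rank of T is strictly less than the order type of the Kleene–Brouwer ordering of T. -/
/-- The "child" relation on the nodes of a tree `T`: `s` is an immediate (one-step)
extension of `t`. -/
def childRel (T : Set (List ℕ)) : ↥T → ↥T → Prop :=
  fun s t => ∃ n : ℕ, (s : List ℕ) = (t : List ℕ) ++ [n]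

/-- For every nonempty well-founded tree `T` on ℕ (no branches),
the rank of `T` (the rank of its root under the child relation, defined by
well-founded recursion) is strictly less than the order type of the Kleene–Brouwer
ordering of `T`. -/
theorem rank_lt_type_KB (T : Set (List ℕ)) (hT : IsTree T) (hne : [] ∈ T)
    (hnb : ∀ x : ℕ → ℕ, ¬IsBranch T x)
    (hwf : WellFounded (childRel T))
    (hwo : IsWellOrder ↥T (Subrel KB T)) :
    (hwf.apply (⟨[], hne⟩ : ↥T)).rank < @Ordinal.type ↥T (Subrel KB T) hwo := by
  have key : ∀ s : ↥T, (hwf.apply s).rank ≤ @Ordinal.typein ↥T (Subrel KB T) hwo s := by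
    intro s
    induction s using hwf.induction with
    | _ s ih =>
      rw [(hwf.apply s).rank_eq]
      apply Ordinal.iSup_le
      intro ⟨b, hb⟩
      rw [Order.succ_le_iff]
      apply lt_of_le_of_lt (ih b hb)
      rw [Ordinal.typein_lt_typein]
      obtain ⟨n, hn⟩ := hb
      exact Or.inl ⟨⟨[n], hn.symm⟩, fun h => by simp [h] at hn⟩
  exact lt_of_le_of_lt (key _) (Ordinal.typein_lt_type _ _)
end
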